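/- Left multiadjoints characterize Fam-admissibility: a functor L : A → B is such that Fam_Σ(L) (the functor induced on free coproduct completions) has a right adjoint if and only if L is a left multiadjoint in the sense of Diers: for every object Z of B there is a family of morphisms (h_i : L X_i → Z)_{i ∈ I} such that every morphism k : L X → Z factors as k = h_i ∘ L f for a unique pair (i, f) with f : X → X_i. -/

import Mathlib

open CategoryTheory

universe v u u'

/-- The free coproduct completion `Fam_Σ A`: objects are small families of objects of `A`. -/
structure Fam (A : Type u) [Category.{v} A] where
  ι : Type v
  obj : ι → A

variable {A : Type u} [Category.{v} A] {B : Type u'} [Category.{v} B]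

/-- Morphisms of families: a reindexing function together with componentwise morphisms. -/
instance : Category.{v} (Fam A) where
  Hom X Y := Σ φ : X.ι → Y.ι, ∀ i, X.obj i ⟶ Y.obj (φ i)
  id X := ⟨fun i => i, fun _ => 𝟙 _⟩
  comp f g := ⟨fun i => g.1 (f.1 i), fun i => f.2 i ≫ g.2 (f.1 i)⟩
  id_comp f := Sigma.ext rfl (heq_of_eq (funext fun i => Category.id_comp _))
  comp_id f := Sigma.ext rfl (heq_of_eq (funext fun i => Category.comp_id _))
  assoc f g h := Sigma.ext rfl (heq_of_eq (funext fun i => Category.assoc _ _ _))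

/-- The functor `Fam_Σ L` induced on free coproduct completions, applying `L` componentwise. -/
def famMap (L : A ⥤ B) : Fam A ⥤ Fam B where
  obj X := ⟨X.ι, fun i => L.obj (X.obj i)⟩
  map f := ⟨f.1, fun i => L.map (f.2 i)⟩
  map_id X := Sigma.ext rfl (heq_of_eq (funext fun i => L.map_id _))
  map_comp f g := Sigma.ext rfl (heq_of_eq (funext fun i => L.map_comp _ _))

/-- `L` is a left multiadjoint (Diers): every `Z` admits a universal family of morphisms
`h i : L (X i) ⟶ Z` through which every `k : L W ⟶ Z` factors as `k = h i ∘ L f` for a unique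
pair `(i, f)`. -/
def IsLeftMultiadjoint (L : A ⥤ B) : Prop :=
  ∀ Z : B, ∃ (I : Type v) (Xs : I → A) (h : ∀ i, L.obj (Xs i) ⟶ Z),
    ∀ (W : A) (k : L.obj W ⟶ Z), ∃! p : Σ i : I, W ⟶ Xs i, L.map p.2 ≫ h p.1 = k

/-- Extensionality for morphisms in `Fam`. -/
theorem Fam.hom_ext {X Y : Fam A} {f g : X ⟶ Y}
    (hfg : ∀ i, (⟨f.1 i, f.2 i⟩ : Σ j, X.obj i ⟶ Y.obj j) = ⟨g.1 i, g.2 i⟩) : f = g := by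
  obtain ⟨φ, k⟩ := f; obtain ⟨ψ, l⟩ := g
  have h1 : φ = ψ := funext fun i => congrArg Sigma.fst (hfg i)
  subst h1
  have h2 : k = l := funext fun i => by
    have := hfg i
    simpa using this
  rw [h2]

theorem Fam.congr_hom {X Y : Fam A} {f g : X ⟶ Y} (e : f = g) (i : X.ι) :
    (⟨f.1 i, f.2 i⟩ : Σ j, X.obj i ⟶ Y.obj j) = ⟨g.1 i, g.2 i⟩ := by
  subst e; rfl

theorem famMap_hasRightAdjoint_iff_leftMultiadjoint (L : A ⥤ B) :
    (∃ R : Fam B ⥤ Fam A, Nonempty (famMap L ⊣ R)) ↔ IsLeftMultiadjoint L := by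
  constructor
  · rintro ⟨R, ⟨adj⟩⟩ Z
    refine ⟨(R.obj ⟨PUnit, fun _ => Z⟩).ι, (R.obj ⟨PUnit, fun _ => Z⟩).obj,
      fun i => (adj.counit.app ⟨PUnit, fun _ => Z⟩).2 i, fun W k => ?_⟩
    let m : (⟨PUnit, fun _ => W⟩ : Fam A) ⟶ R.obj ⟨PUnit, fun _ => Z⟩ :=
      adj.homEquiv ⟨PUnit, fun _ => W⟩ ⟨PUnit, fun _ => Z⟩ ⟨fun _ => PUnit.unit, fun _ => k⟩
    have e1 : (famMap L).map m ≫ adj.counit.app ⟨PUnit, fun _ => Z⟩ =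
        (⟨fun _ => PUnit.unit, fun _ => k⟩ : (famMap L).obj ⟨PUnit, fun _ => W⟩ ⟶
          ⟨PUnit, fun _ => Z⟩) := by
      exact (adj.homEquiv _ _).symm_apply_apply _
    refine ⟨⟨m.1 PUnit.unit, m.2 PUnit.unit⟩, ?_, ?_⟩
    · have e3 := Fam.congr_hom e1 PUnit.unit
      exact eq_of_heq (Sigma.ext_iff.mp e3).2
    · rintro ⟨i, f⟩ hp
      let m' : (⟨PUnit, fun _ => W⟩ : Fam A) ⟶ R.obj ⟨PUnit, fun _ => Z⟩ :=
        ⟨fun _ => i, fun _ => f⟩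
      have e2 : (famMap L).map m' ≫ adj.counit.app ⟨PUnit, fun _ => Z⟩ =
          (⟨fun _ => PUnit.unit, fun _ => k⟩ : (famMap L).obj ⟨PUnit, fun _ => W⟩ ⟶
            ⟨PUnit, fun _ => Z⟩) := by
        apply Fam.hom_ext
        intro u
        exact Sigma.ext rfl (heq_of_eq hp)
      have em : m' = m :=
        (adj.homEquiv _ _).symm.injective
          ((show (adj.homEquiv _ _).symm m' = _ from e2).trans
            ((adj.homEquiv _ _).symm_apply_apply _).symm)
      exact (congrArg (fun (n : (⟨PUnit, fun _ => W⟩ : Fam A) ⟶ R.obj ⟨PUnit, fun _ => Z⟩) =>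
        (⟨n.1 PUnit.unit, n.2 PUnit.unit⟩ :
          Σ j, W ⟶ (R.obj ⟨PUnit, fun _ => Z⟩).obj j)) em)
  · intro hL
    choose I Xs h hu using hL
    -- the chosen universal factorization
    let u : ∀ (Z : B) (W : A) (k : L.obj W ⟶ Z), Σ i : I Z, W ⟶ Xs Z i :=
      fun Z W k => (hu Z W k).exists.choose
    have uspec : ∀ Z W k, L.map (u Z W k).2 ≫ h Z (u Z W k).1 = k :=
      fun Z W k => (hu Z W k).exists.choose_spec
    have uuniq : ∀ Z W k (p : Σ i : I Z, W ⟶ Xs Z i),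
        L.map p.2 ≫ h Z p.1 = k → p = u Z W k := by
      intro Z W k p hp
      exact ((hu Z W k).unique hp (uspec Z W k))
    let G_obj : Fam B → Fam A := fun Y =>
      ⟨Σ j : Y.ι, I (Y.obj j), fun p => Xs (Y.obj p.1) p.2⟩
    let e : ∀ (X : Fam A) (Y : Fam B), ((famMap L).obj X ⟶ Y) ≃ (X ⟶ G_obj Y) := fun X Y =>
      { toFun := fun m =>
          ⟨fun i => ⟨m.1 i, (u (Y.obj (m.1 i)) (X.obj i) (m.2 i)).1⟩,
           fun i => (u (Y.obj (m.1 i)) (X.obj i) (m.2 i)).2⟩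
        invFun := fun n =>
          ⟨fun i => (n.1 i).1, fun i => L.map (n.2 i) ≫ h (Y.obj (n.1 i).1) (n.1 i).2⟩
        left_inv := fun m => by
          apply Fam.hom_ext
          intro i
          exact Sigma.ext rfl (heq_of_eq (uspec _ _ _))
        right_inv := fun n => by
          apply Fam.hom_ext
          intro i
          have := (uuniq (Y.obj (n.1 i).1) (X.obj i) (L.map (n.2 i) ≫ h _ (n.1 i).2)
            ⟨(n.1 i).2, n.2 i⟩ rfl).symm
          exact congrArg (fun (p : Σ j, X.obj i ⟶ Xs (Y.obj (n.1 i).1) j) =>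
            (⟨⟨(n.1 i).1, p.1⟩, p.2⟩ : Σ q : Σ j : Y.ι, I (Y.obj j),
              X.obj i ⟶ Xs (Y.obj q.1) q.2)) this }
    have he : ∀ (X' X : Fam A) (Y : Fam B) (f : X' ⟶ X) (g : (famMap L).obj X ⟶ Y),
        e X' Y ((famMap L).map f ≫ g) = f ≫ e X Y g := by
      intro X' X Y f g
      apply Fam.hom_ext
      intro i
      have huniq := uuniq (Y.obj (g.1 (f.1 i))) (X'.obj i)
        (L.map (f.2 i) ≫ g.2 (f.1 i))
        ⟨(u (Y.obj (g.1 (f.1 i))) (X.obj (f.1 i)) (g.2 (f.1 i))).1,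
         f.2 i ≫ (u (Y.obj (g.1 (f.1 i))) (X.obj (f.1 i)) (g.2 (f.1 i))).2⟩
        (by rw [L.map_comp, Category.assoc]; exact congrArg (fun t => L.map (f.2 i) ≫ t) (uspec _ _ _))
      exact congrArg (fun (p : Σ j, X'.obj i ⟶ Xs (Y.obj (g.1 (f.1 i))) j) =>
        (⟨⟨g.1 (f.1 i), p.1⟩, p.2⟩ : Σ q : Σ j : Y.ι, I (Y.obj j),
          X'.obj i ⟶ Xs (Y.obj q.1) q.2)) huniq.symm
    exact ⟨Adjunction.rightAdjointOfEquiv e he, ⟨Adjunction.adjunctionOfEquivRight e he⟩⟩
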